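/- Let β ∈ ℂ and let T(M,N,β) = Σ_{m=1}^{M} Σ_{n=1}^{N} v_{mn}^H v_{mn}, where v_{mn} = ( 1, j, j·2π·((m−1)/M)·β, j·2π·((n−1)/N)·β ) ∈ ℂ⁴. Then, entrywise, (1/(M·N))·T(M,N,β) converges, as M → ∞ and N → ∞ (jointly along the product of atTop filters on the positive integers), to the 4×4 matrix T_L(β) with rows: row 1 = ( 1, j, j·π·β, j·π·β ); row 2 = ( −j, 1, π·β, π·β ); row 3 = ( −j·π·conj(β), π·conj(β), (4/3)·π²·|β|², π²·|β|² ); row 4 = ( −j·π·conj(β), π·conj(β), π²·|β|², (4/3)·π²·|β|² ). -/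

import Mathlib

open Finset Filter Complex

/-- The row vector `v_{mn} = (1, j, j·2π·((m-1)/M)·β, j·2π·((n-1)/N)·β) ∈ ℂ⁴`, where the
argument `m` corresponds to `m-1` in the paper (i.e. `m` ranges over `0, …, M-1`). -/
noncomputable def vrow (M N : ℕ) (β : ℂ) (m n : ℕ) : Fin 4 → ℂ :=
  ![1, Complex.I,
    Complex.I * (2 * (Real.pi : ℂ)) * ((m : ℂ) / (M : ℂ)) * β,
    Complex.I * (2 * (Real.pi : ℂ)) * ((n : ℂ) / (N : ℂ)) * β]

/-- The asymptotic limit `T_L(β)` of the normalized CRLB weighting matrix. -/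
noncomputable def TL (β : ℂ) : Matrix (Fin 4) (Fin 4) ℂ :=
  !![1, Complex.I, Complex.I * (Real.pi : ℂ) * β, Complex.I * (Real.pi : ℂ) * β;
     -Complex.I, 1, (Real.pi : ℂ) * β, (Real.pi : ℂ) * β;
     -Complex.I * (Real.pi : ℂ) * (starRingEnd ℂ) β, (Real.pi : ℂ) * (starRingEnd ℂ) β,
       (4 / 3) * (Real.pi : ℂ) ^ 2 * (Complex.normSq β : ℂ),
       (Real.pi : ℂ) ^ 2 * (Complex.normSq β : ℂ);
     -Complex.I * (Real.pi : ℂ) * (starRingEnd ℂ) β, (Real.pi : ℂ) * (starRingEnd ℂ) β,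
       (Real.pi : ℂ) ^ 2 * (Complex.normSq β : ℂ),
       (4 / 3) * (Real.pi : ℂ) ^ 2 * (Complex.normSq β : ℂ)]

lemma sum_id' (M : ℕ) : ∑ m ∈ range M, (m:ℂ) = M*(M-1)/2 := by
  induction M with
  | zero => simp
  | succ k ih => rw [Finset.sum_range_succ, ih]; push_cast; ring

lemma sum_sq' (M : ℕ) : ∑ m ∈ range M, (m:ℂ)^2 = M*(M-1)*(2*M-1)/6 := by
  induction M with
  | zero => simp
  | succ k ih => rw [Finset.sum_range_succ, ih]; push_cast; ring

lemma hinv : Tendsto (fun M:ℕ => ((M:ℂ))⁻¹) atTop (nhds 0) := by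
  have h := tendsto_inv_atTop_nhds_zero_nat (𝕜 := ℝ)
  have h2 := (Complex.continuous_ofReal.tendsto 0).comp h
  exact Tendsto.congr (fun n => by simp [Function.comp]) h2

lemma S0 (c : ℂ) : Tendsto (fun M:ℕ => (1/(M:ℂ)) * ∑ _m ∈ range M, c) atTop (nhds c) := by
  apply Tendsto.congr' _ tendsto_const_nhds
  filter_upwards [eventually_ge_atTop 1] with M hM
  have hM0 : (M:ℂ) ≠ 0 := Nat.cast_ne_zero.mpr (by omega)
  rw [Finset.sum_const, card_range, nsmul_eq_mul]
  field_simp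

lemma S1 (c : ℂ) : Tendsto (fun M:ℕ => (1/(M:ℂ)) * ∑ m ∈ range M, c * ((m:ℂ)/(M:ℂ))) atTop (nhds (c/2)) := by
  have key : Tendsto (fun M:ℕ => c/2 - c/2 * ((M:ℂ))⁻¹) atTop (nhds (c/2)) := by
    simpa using tendsto_const_nhds.sub (hinv.const_mul (c/2))
  apply Tendsto.congr' _ key
  filter_upwards [eventually_ge_atTop 1] with M hM
  have hM0 : (M:ℂ) ≠ 0 := Nat.cast_ne_zero.mpr (by omega)
  have : ∑ m ∈ range M, c * ((m:ℂ)/(M:ℂ)) = (c / M) * ∑ m ∈ range M, (m:ℂ) := by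
    rw [Finset.mul_sum]; exact Finset.sum_congr rfl fun m _ => by ring
  rw [this, sum_id']
  field_simp

lemma S2 (c : ℂ) : Tendsto (fun M:ℕ => (1/(M:ℂ)) * ∑ m ∈ range M, c * ((m:ℂ)/(M:ℂ))^2) atTop (nhds (c/3)) := by
  have key : Tendsto (fun M:ℕ => c/3 - c/2 * ((M:ℂ))⁻¹ + c/6 * (((M:ℂ))⁻¹ * ((M:ℂ))⁻¹)) atTop (nhds (c/3)) := by
    have h2 := ((tendsto_const_nhds (x := c/3)).sub (hinv.const_mul (c/2))).add ((hinv.mul hinv).const_mul (c/6))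
    simpa using h2
  apply Tendsto.congr' _ key
  filter_upwards [eventually_ge_atTop 1] with M hM
  have hM0 : (M:ℂ) ≠ 0 := Nat.cast_ne_zero.mpr (by omega)
  have : ∑ m ∈ range M, c * ((m:ℂ)/(M:ℂ))^2 = (c / M^2) * ∑ m ∈ range M, (m:ℂ)^2 := by
    rw [Finset.mul_sum]; exact Finset.sum_congr rfl fun m _ => by ring
  rw [this, sum_sq']
  field_simp
  ring

lemma combine {f g : ℕ → ℕ → ℂ} {A B : ℂ}
    (hf : Tendsto (fun M:ℕ => (1/(M:ℂ)) * ∑ m ∈ range M, f M m) atTop (nhds A))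
    (hg : Tendsto (fun N:ℕ => (1/(N:ℂ)) * ∑ n ∈ range N, g N n) atTop (nhds B)) :
    Tendsto (fun p : ℕ × ℕ => (1/((p.1:ℂ)*(p.2:ℂ))) *
      ∑ m ∈ range p.1, ∑ n ∈ range p.2, f p.1 m * g p.2 n)
      (atTop ×ˢ atTop) (nhds (A*B)) := by
  have h := (hf.comp tendsto_fst).mul (hg.comp tendsto_snd)
  apply Tendsto.congr _ h
  intro p
  simp only [Function.comp]
  rw [← Finset.sum_mul_sum]
  ring

lemma tendsto_of_eq {f g : ℕ × ℕ → ℂ} {x y : ℂ}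
    (h : Tendsto f (atTop ×ˢ atTop) (nhds x))
    (hfg : ∀ p, f p = g p) (hxy : x = y) :
    Tendsto g (atTop ×ˢ atTop) (nhds y) := hxy ▸ h.congr hfg


/-- Entrywise, `(1/(MN))·T(M,N,β)` converges, as `M, N → ∞` jointly, to `T_L(β)`. -/
theorem weighting_matrix_tendsto (β : ℂ) :
    ∀ s t : Fin 4,
      Tendsto
        (fun p : ℕ × ℕ =>
          (1 / ((p.1 : ℂ) * (p.2 : ℂ))) *
            ∑ m ∈ Finset.range p.1, ∑ n ∈ Finset.range p.2,
              (starRingEnd ℂ) (vrow p.1 p.2 β m n s) * vrow p.1 p.2 β m n t)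
        (atTop ×ˢ atTop) (nhds (TL β s t)) := by
  set c2 : ℂ := Complex.I * (2 * (Real.pi : ℂ)) * β with hc2
  set d2 : ℂ := -Complex.I * (2 * (Real.pi : ℂ)) * (starRingEnd ℂ) β with hd2
  have hns : (Complex.normSq β : ℂ) = (starRingEnd ℂ) β * β := Complex.normSq_eq_conj_mul_self
  intro s t
  fin_cases s <;> fin_cases t <;>
  [ (refine tendsto_of_eq (combine (S0 1) (S0 1)) (fun p => ?_) ?_);
    (refine tendsto_of_eq (combine (S0 Complex.I) (S0 1)) (fun p => ?_) ?_);
    (refine tendsto_of_eq (combine (S1 c2) (S0 1)) (fun p => ?_) ?_);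
    (refine tendsto_of_eq (combine (S0 1) (S1 c2)) (fun p => ?_) ?_);
    (refine tendsto_of_eq (combine (S0 (-Complex.I)) (S0 1)) (fun p => ?_) ?_);
    (refine tendsto_of_eq (combine (S0 (-Complex.I * Complex.I)) (S0 1)) (fun p => ?_) ?_);
    (refine tendsto_of_eq (combine (S1 (-Complex.I * c2)) (S0 1)) (fun p => ?_) ?_);
    (refine tendsto_of_eq (combine (S0 (-Complex.I)) (S1 c2)) (fun p => ?_) ?_);
    (refine tendsto_of_eq (combine (S1 d2) (S0 1)) (fun p => ?_) ?_);
    (refine tendsto_of_eq (combine (S1 (d2 * Complex.I)) (S0 1)) (fun p => ?_) ?_);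
    (refine tendsto_of_eq (combine (S2 (d2 * c2)) (S0 1)) (fun p => ?_) ?_);
    (refine tendsto_of_eq (combine (S1 d2) (S1 c2)) (fun p => ?_) ?_);
    (refine tendsto_of_eq (combine (S0 1) (S1 d2)) (fun p => ?_) ?_);
    (refine tendsto_of_eq (combine (S0 Complex.I) (S1 d2)) (fun p => ?_) ?_);
    (refine tendsto_of_eq (combine (S1 c2) (S1 d2)) (fun p => ?_) ?_);
    (refine tendsto_of_eq (combine (S0 1) (S2 (d2 * c2))) (fun p => ?_) ?_)] <;>
  first
  | (refine congrArg _ (Finset.sum_congr rfl fun m _ => Finset.sum_congr rfl fun n _ => ?_)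
     simp [hc2, hd2, vrow, Complex.conj_I, Complex.conj_ofReal, div_eq_mul_inv, map_ofNat]
     try ring
     done)
  | (simp only [hc2, hd2]
     simp [TL, hns]
     try ring_nf
     try simp [Complex.I_sq]
     try ring
     try rfl
     done)
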